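/- Let γ > 1, K > 0, μ > 0, ξ ∈ ℝ, T ∈ (0,∞], and let a, b, W satisfy the hypotheses (i)–(iii) as in the main construction: a twice continuously differentiable, a > 0, a'' = ξ/a^γ; b'' + (1+γ)(a'/a)b' + [2ξ/a^{γ+1} + (γ−1)(a'/a)²]b = 0; W' + (γ−1)W a'/a − ((γ−1)/(Kγ))[b' + b a'/a]b = 0. Define R(x,t) = W(t) − ((γ−1)/(Kγ))[b'(t) + b(t)a'(t)/a(t)] x − ((γ−1)ξ/(2Kγ a(t)^{γ+1})) x², u(x,t) = (a'(t)/a(t)) x + b(t), and ρ(x,t) = R(x,t)^{1/(γ−1)}. Then at every (x,t) with R(x,t) > 0, the pair (ρ, u) also satisfies the 1-dimensional compressible Navier–Stokes equations: ∂_t ρ + ∂_x(ρu) = 0 and ∂_t(ρu) + ∂_x(ρu² + Kρ^γ) = μ ∂²u/∂x² (indeed ∂²u/∂x² = 0 since u is linear in x). -/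

import Mathlib

set_option maxHeartbeats 4000000


open Real Set Filter Topology
open scoped ENNReal

/-- The constructed perturbational solutions of the compressible Euler equations
also solve the 1-dimensional compressible Navier–Stokes equations
`ρ_t + (ρu)_x = 0`, `(ρu)_t + (ρu² + Kρ^γ)_x = μ u_{xx}`, since the velocity is
linear in `x` and hence `u_{xx} = 0`. -/
theorem perturbational_solutions_navier_stokes
    (γ K μ ξ : ℝ) (hγ : 1 < γ) (hK : 0 < K) (hμ : 0 < μ)
    (T : ℝ≥0∞) (hT : 0 < T)
    (D : Set ℝ) (hD : D = {t : ℝ | 0 ≤ t ∧ ENNReal.ofReal t < T})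
    (a a' a'' b b' b'' W W' : ℝ → ℝ)
    (ha : ∀ t ∈ D, HasDerivAt a (a' t) t)
    (ha' : ∀ t ∈ D, HasDerivAt a' (a'' t) t)
    (ha''c : ContinuousOn a'' D)
    (hb : ∀ t ∈ D, HasDerivAt b (b' t) t)
    (hb' : ∀ t ∈ D, HasDerivAt b' (b'' t) t)
    (hb''c : ContinuousOn b'' D)
    (hW : ∀ t ∈ D, HasDerivAt W (W' t) t)
    (hW'c : ContinuousOn W' D)
    (hapos : ∀ t ∈ D, 0 < a t)
    (hEmden : ∀ t ∈ D, a'' t = ξ / a t ^ γ)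
    (hbODE : ∀ t ∈ D, b'' t + (1 + γ) * (a' t / a t) * b' t
        + (2 * ξ / a t ^ (γ + 1) + (γ - 1) * (a' t) ^ 2 / (a t) ^ 2) * b t = 0)
    (hWODE : ∀ t ∈ D, W' t + (γ - 1) * W t * (a' t / a t)
        - ((γ - 1) / (K * γ)) * (b' t + b t * (a' t / a t)) * b t = 0)
    (R u ρ : ℝ → ℝ → ℝ)
    (hR : R = fun x t => W t - ((γ - 1) / (K * γ)) * (b' t + b t * (a' t / a t)) * x
        - ((γ - 1) * ξ / (2 * K * γ * a t ^ (γ + 1))) * x ^ 2)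
    (hu : u = fun x t => (a' t / a t) * x + b t)
    (hρ : ρ = fun x t => R x t ^ ((1 : ℝ) / (γ - 1)))
    (x t : ℝ) (ht : t ∈ D) (hRpos : 0 < R x t) :
    deriv (fun τ => ρ x τ) t + deriv (fun y => ρ y t * u y t) x = 0 ∧
    deriv (fun τ => ρ x τ * u x τ) t
      + deriv (fun y => ρ y t * u y t ^ 2 + K * ρ y t ^ γ) x
      = μ * deriv (fun y => deriv (fun z => u z t) y) x ∧
    deriv (fun y => deriv (fun z => u z t) y) x = 0 := by
  have hγ1 : (0:ℝ) < γ - 1 := by linarith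
  have hγ1ne : γ - 1 ≠ 0 := ne_of_gt hγ1
  have hγ0 : (0:ℝ) < γ := by linarith
  have hγne : γ ≠ 0 := ne_of_gt hγ0
  have hKne : K ≠ 0 := ne_of_gt hK
  have hA : 0 < a t := hapos t ht
  have hAne : a t ≠ 0 := ne_of_gt hA
  have hQ : 0 < a t ^ γ := Real.rpow_pos_of_pos hA γ
  have hQne : a t ^ γ ≠ 0 := ne_of_gt hQ
  have hP : 0 < a t ^ (γ + 1) := Real.rpow_pos_of_pos hA _
  have hPne : a t ^ (γ + 1) ≠ 0 := ne_of_gt hP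
  have hDne : 2 * K * γ * a t ^ (γ + 1) ≠ 0 :=
    ne_of_gt (mul_pos (mul_pos (mul_pos two_pos hK) hγ0) hP)
  simp only [hρ, hu, hR] at hRpos ⊢
  have hrne : W t - (γ - 1) / (K * γ) * (b' t + b t * (a' t / a t)) * x -
      (γ - 1) * ξ / (2 * K * γ * a t ^ (γ + 1)) * x ^ 2 ≠ 0 := ne_of_gt hRpos
  have hDa := ha t ht
  have hDa' := ha' t ht
  have hDb := hb t ht
  have hDb' := hb' t ht
  have hDW := hW t ht
  have hdiv : HasDerivAt (fun τ => a' τ / a τ)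
      ((a'' t * a t - a' t * a' t) / a t ^ 2) t := hDa'.div hDa hAne
  have hpow : HasDerivAt (fun τ => a τ ^ (γ + 1)) (a' t * (γ + 1) * a t ^ γ) t := by
    have h := hDa.rpow_const (p := γ + 1) (Or.inl hAne)
    simpa using h
  have hCt : HasDerivAt
      (fun τ => (γ - 1) / (K * γ) * (b' τ + b τ * (a' τ / a τ)) * x) _ t :=
    ((hDb'.add (hDb.mul hdiv)).const_mul ((γ - 1) / (K * γ))).mul_const x
  have hEt : HasDerivAt
      (fun τ => (γ - 1) * ξ / (2 * K * γ * a τ ^ (γ + 1)) * x ^ 2) _ t :=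
    (((hasDerivAt_const t ((γ - 1) * ξ)).div (hpow.const_mul (2 * K * γ)) hDne)).mul_const (x ^ 2)
  have hRt : HasDerivAt (fun τ => W τ - (γ - 1) / (K * γ) * (b' τ + b τ * (a' τ / a τ)) * x -
      (γ - 1) * ξ / (2 * K * γ * a τ ^ (γ + 1)) * x ^ 2) _ t := (hDW.sub hCt).sub hEt
  have hρt : HasDerivAt (fun τ => (W τ - (γ - 1) / (K * γ) * (b' τ + b τ * (a' τ / a τ)) * x -
      (γ - 1) * ξ / (2 * K * γ * a τ ^ (γ + 1)) * x ^ 2) ^ ((1:ℝ) / (γ - 1))) _ t :=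
    hRt.rpow_const (Or.inl hrne)
  have hut : HasDerivAt (fun τ => a' τ / a τ * x + b τ) _ t := (hdiv.mul_const x).add hDb
  have hρut : HasDerivAt (fun τ => (W τ - (γ - 1) / (K * γ) * (b' τ + b τ * (a' τ / a τ)) * x -
      (γ - 1) * ξ / (2 * K * γ * a τ ^ (γ + 1)) * x ^ 2) ^ ((1:ℝ) / (γ - 1)) *
      (a' τ / a τ * x + b τ)) _ t := hρt.mul hut
  have hRx : HasDerivAt (fun y => W t - (γ - 1) / (K * γ) * (b' t + b t * (a' t / a t)) * y -
      (γ - 1) * ξ / (2 * K * γ * a t ^ (γ + 1)) * y ^ 2) _ x :=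
    ((hasDerivAt_const x (W t)).sub
      ((hasDerivAt_id x).const_mul ((γ - 1) / (K * γ) * (b' t + b t * (a' t / a t))))).sub
      ((hasDerivAt_pow 2 x).const_mul ((γ - 1) * ξ / (2 * K * γ * a t ^ (γ + 1))))
  have hρx : HasDerivAt (fun y => (W t - (γ - 1) / (K * γ) * (b' t + b t * (a' t / a t)) * y -
      (γ - 1) * ξ / (2 * K * γ * a t ^ (γ + 1)) * y ^ 2) ^ ((1:ℝ) / (γ - 1))) _ x :=
    hRx.rpow_const (Or.inl hrne)
  have hux : HasDerivAt (fun y => a' t / a t * y + b t) _ x :=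
    ((hasDerivAt_id x).const_mul (a' t / a t)).add_const (b t)
  have hρux : HasDerivAt (fun y => (W t - (γ - 1) / (K * γ) * (b' t + b t * (a' t / a t)) * y -
      (γ - 1) * ξ / (2 * K * γ * a t ^ (γ + 1)) * y ^ 2) ^ ((1:ℝ) / (γ - 1)) *
      (a' t / a t * y + b t)) _ x := hρx.mul hux
  have hsum : HasDerivAt (fun y => (W t - (γ - 1) / (K * γ) * (b' t + b t * (a' t / a t)) * y -
      (γ - 1) * ξ / (2 * K * γ * a t ^ (γ + 1)) * y ^ 2) ^ ((1:ℝ) / (γ - 1)) *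
      (a' t / a t * y + b t) ^ 2 +
      K * ((W t - (γ - 1) / (K * γ) * (b' t + b t * (a' t / a t)) * y -
      (γ - 1) * ξ / (2 * K * γ * a t ^ (γ + 1)) * y ^ 2) ^ ((1:ℝ) / (γ - 1))) ^ γ) _ x :=
    (hρx.mul (hux.pow 2)).add ((hρx.rpow_const (Or.inr hγ.le)).const_mul K)
  have hud : (fun y => deriv (fun z => a' t / a t * z + b t) y) = fun _ => a' t / a t := by
    funext y
    have h := (((hasDerivAt_id y).const_mul (a' t / a t)).add_const (b t)).deriv
    simpa using h
  have hudd : deriv (fun y => deriv (fun z => a' t / a t * z + b t) y) x = 0 := by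
    rw [hud]; exact deriv_const x _
  have hPA : a t ^ (γ + 1) = a t ^ γ * a t := by
    rw [Real.rpow_add hA, Real.rpow_one]
  have hsr : (W t - (γ - 1) / (K * γ) * (b' t + b t * (a' t / a t)) * x - (γ - 1) * ξ / (2 * K * γ * a t ^ (γ + 1)) * x ^ 2) ^ ((1:ℝ) / (γ - 1)) = (W t - (γ - 1) / (K * γ) * (b' t + b t * (a' t / a t)) * x - (γ - 1) * ξ / (2 * K * γ * a t ^ (γ + 1)) * x ^ 2) ^ ((1:ℝ) / (γ - 1) - 1) * (W t - (γ - 1) / (K * γ) * (b' t + b t * (a' t / a t)) * x - (γ - 1) * ξ / (2 * K * γ * a t ^ (γ + 1)) * x ^ 2) := by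
    have h1 : (1:ℝ) / (γ - 1) = (1 / (γ - 1) - 1) + 1 := by ring
    conv_lhs => rw [h1]
    rw [Real.rpow_add hRpos, Real.rpow_one]
  have hrr : ((W t - (γ - 1) / (K * γ) * (b' t + b t * (a' t / a t)) * x - (γ - 1) * ξ / (2 * K * γ * a t ^ (γ + 1)) * x ^ 2) ^ ((1:ℝ) / (γ - 1))) ^ (γ - 1) = (W t - (γ - 1) / (K * γ) * (b' t + b t * (a' t / a t)) * x - (γ - 1) * ξ / (2 * K * γ * a t ^ (γ + 1)) * x ^ 2) := by
    rw [← Real.rpow_mul (le_of_lt hRpos)]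
    have h1 : (1:ℝ) / (γ - 1) * (γ - 1) = 1 := by field_simp
    rw [h1, Real.rpow_one]
  have hb''e : b'' t = -((1 + γ) * (a' t / a t) * b' t
      + (2 * ξ / a t ^ (γ + 1) + (γ - 1) * a' t ^ 2 / a t ^ 2) * b t) := by
    have h := hbODE t ht; linarith
  have hW'e : W' t = -((γ - 1) * W t * (a' t / a t))
      + (γ - 1) / (K * γ) * (b' t + b t * (a' t / a t)) * b t := by
    have h := hWODE t ht; linarith
  have hEm := hEmden t ht
  refine ⟨?_, ?_, hudd⟩
  · rw [hρt.deriv, hρux.deriv, hsr, hEm, hb''e, hW'e, hPA]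
    field_simp
    ring
  · rw [hudd, hρut.deriv, hsum.deriv, hrr, hsr, hEm, hb''e, hW'e, hPA]
    simp only [Pi.pow_apply]
    generalize (W t - (γ - 1) / (K * γ) * (b' t + b t * (a' t / a t)) * x - (γ - 1) * ξ / (2 * K * γ * (a t ^ γ * a t)) * x ^ 2) ^ ((1:ℝ) / (γ - 1) - 1) = S
    generalize a t ^ γ = Q at hQne ⊢
    generalize a t = A at hAne ⊢
    norm_num only [pow_one]
    field_simp
    ring
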